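/- arXiv:1801.05928 — 6 statements merged into one kernel-verified Lean document; each statement's English description precedes it below -/
import Mathlib

section
/- No positive integer m with 1 < m < 49 is representable. -/
def Representable (m : ℕ) : Prop :=
  ∃ X : Finset ℕ, (∀ x ∈ X, 0 < x) ∧
    (∑ x ∈ X, (1 : ℚ) / x) = 1 ∧ (∑ x ∈ X, x ^ 2) = m

theorem not_representable_between_one_and_49 :
    ∀ m : ℕ, 1 < m → m < 49 → ¬ Representable m := by
  rintro m hm1 hm49 ⟨X, hpos, hrec, hsq⟩
  have hsub : X ⊆ Finset.Icc 1 6 := by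
    intro x hx
    have h1 := hpos x hx
    have h2 : x ^ 2 ≤ m := hsq ▸ Finset.single_le_sum (f := fun i => i ^ 2) (fun i _ => Nat.zero_le _) hx
    have h3 : x ≤ 6 := by nlinarith
    simp [Finset.mem_Icc]; omega
  have hX : X ∈ (Finset.Icc 1 6).powerset := Finset.mem_powerset.mpr hsub
  fin_cases hX <;> norm_num at hrec <;> norm_num at hsq <;> omega
end

section
/- If X is a representation of an integer m (a finite set of positive integers with reciprocals summing to 1 and squares summing to m) and m > 1, then the set Y = {2} ∪ 2X (where 2X = {2x : x ∈ X}) is a representation of 4m + 4. -/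
def IsRepresentation (X : Finset ℕ) (m : ℕ) : Prop :=
  (∀ x ∈ X, 0 < x) ∧ (∑ x ∈ X, (1 : ℚ) / x) = 1 ∧ (∑ x ∈ X, x ^ 2) = m

theorem f0_representation (X : Finset ℕ) (m : ℕ) (hm : 1 < m)
    (hX : IsRepresentation X m) :
    IsRepresentation (insert 2 (X.image (fun x => 2 * x))) (4 * m + 4) := by
  obtain ⟨hpos, hrec, hsq⟩ := hX
  have hinj : Set.InjOn (fun x => 2 * x) X := fun a _ b _ h => by dsimp at h; omega
  have h1 : 1 ∉ X := by
    intro h1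
    have hrest : ∑ x ∈ X.erase 1, (1 : ℚ) / x = 0 := by
      have := Finset.add_sum_erase X (fun x => (1 : ℚ) / x) h1
      push_cast at this ⊢
      rw [hrec] at this
      linarith [this]
    have hXeq : X = {1} := by
      have hz : ∀ x ∈ X.erase 1, (0 : ℚ) < 1 / x := by
        intro x hx
        have hx' := hpos x (Finset.mem_of_mem_erase hx)
        positivity
      have he : X.erase 1 = ∅ := by
        by_contra hne
        obtain ⟨y, hy⟩ := Finset.nonempty_of_ne_empty hne
        have := Finset.sum_pos hz ⟨y, hy⟩
        linarith
      rcases (Finset.erase_eq_empty_iff X 1).mp he with h | h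
      · simp [h] at h1
      · exact h
    rw [hXeq] at hsq
    simp at hsq
    omega
  have h2 : (2 : ℕ) ∉ X.image (fun x => 2 * x) := by
    intro hmem
    obtain ⟨x, hx, hx2⟩ := Finset.mem_image.mp hmem
    have : x = 1 := by omega
    exact h1 (this ▸ hx)
  refine ⟨?_, ?_, ?_⟩
  · intro x hx
    simp only [Finset.mem_insert, Finset.mem_image] at hx
    rcases hx with rfl | ⟨y, hy, rfl⟩
    · norm_num
    · have := hpos y hy; omega
  · rw [Finset.sum_insert h2, Finset.sum_image (fun a ha b hb => hinj ha hb)]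
    have : ∑ x ∈ X, (1 : ℚ) / (2 * x : ℕ) = (1/2) * ∑ x ∈ X, (1 : ℚ) / x := by
      rw [Finset.mul_sum]
      apply Finset.sum_congr rfl
      intro x hx
      push_cast
      ring
    rw [this, hrec]
    norm_num
  · rw [Finset.sum_insert h2, Finset.sum_image (fun a ha b hb => hinj ha hb)]
    have : ∑ x ∈ X, (2 * x) ^ 2 = 4 * ∑ x ∈ X, x ^ 2 := by
      rw [Finset.mul_sum]; apply Finset.sum_congr rfl; intro x hx; ring
    rw [this, hsq]
    ring
end

section
/- If X is a representation of an integer m with 39 ∉ X, then Y = {3, 7, 78, 91} ∪ 2X is a representation of 4m + 14423, and moreover 39 ∉ Y. -/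
theorem f3_representation (X : Finset ℕ) (m : ℕ)
    (hX : IsRepresentation X m) (h39 : 39 ∉ X) :
    IsRepresentation (({3, 7, 78, 91} : Finset ℕ) ∪ X.image (fun x => 2 * x))
      (4 * m + 14423) ∧
    39 ∉ ({3, 7, 78, 91} : Finset ℕ) ∪ X.image (fun x => 2 * x) := by
  obtain ⟨hpos, hsum, hsq⟩ := hX
  have hinj : Set.InjOn (fun x => 2 * x) X := by
    intro a _ b _ h; simp only at h; omega
  have hdisj : Disjoint ({3, 7, 78, 91} : Finset ℕ) (X.image (fun x => 2 * x)) := by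
    rw [Finset.disjoint_left]
    intro a ha hb
    simp only [Finset.mem_image] at hb
    obtain ⟨x, hx, rfl⟩ := hb
    simp only [Finset.mem_insert, Finset.mem_singleton] at ha
    rcases ha with h|h|h|h
    · omega
    · omega
    · have hx39 : x = 39 := by omega
      exact h39 (hx39 ▸ hx)
    · omega
  have hsum_union : ∀ {M : Type} [AddCommMonoid M] (f : ℕ → M),
      (∑ x ∈ ({3, 7, 78, 91} : Finset ℕ) ∪ X.image (fun x => 2 * x), f x)
        = f 3 + f 7 + f 78 + f 91 + ∑ x ∈ X, f (2 * x) := by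
    intro M _ f
    rw [Finset.sum_union hdisj, Finset.sum_image hinj]
    simp [Finset.sum_insert, Finset.mem_insert]
    abel
  refine ⟨⟨?_, ?_, ?_⟩, ?_⟩
  · intro x hx
    rcases Finset.mem_union.mp hx with h | h
    · fin_cases h <;> norm_num
    · simp only [Finset.mem_image] at h
      obtain ⟨y, hy, rfl⟩ := h
      have := hpos y hy; omega
  · rw [hsum_union]
    have : ∀ x ∈ X, (1 : ℚ) / (2 * x : ℕ) = (1/2) * (1 / x) := by
      intro x hx; push_cast; ring
    rw [Finset.sum_congr rfl this, ← Finset.mul_sum, hsum]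
    norm_num
  · rw [hsum_union]
    have : ∀ x ∈ X, ((2 * x : ℕ) : ℕ) ^ 2 = 4 * x ^ 2 := by intro x _; ring
    rw [Finset.sum_congr rfl this, ← Finset.mul_sum, hsq]
    ring
  · intro h
    rcases Finset.mem_union.mp h with h | h
    · revert h; decide
    · simp only [Finset.mem_image] at h
      obtain ⟨x, hx, hx2⟩ := h
      omega
end

section
/- If X is a representation of an integer m with 21 ∉ X and 39 ∉ X, then Y = {5, 7, 9, 45, 78, 91} ∪ 2X is a representation of 4m + 16545 with 21 ∉ Y and 39 ∉ Y. -/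
theorem f1_representation (X : Finset ℕ) (m : ℕ)
    (hX : IsRepresentation X m) (h21 : 21 ∉ X) (h39 : 39 ∉ X) :
    IsRepresentation (({5, 7, 9, 45, 78, 91} : Finset ℕ) ∪ X.image (fun x => 2 * x))
      (4 * m + 16545) ∧
    21 ∉ ({5, 7, 9, 45, 78, 91} : Finset ℕ) ∪ X.image (fun x => 2 * x) ∧
    39 ∉ ({5, 7, 9, 45, 78, 91} : Finset ℕ) ∪ X.image (fun x => 2 * x) := by
  obtain ⟨hpos, hsum, hsq⟩ := hX
  have hinj : ∀ x ∈ X, ∀ y ∈ X, 2 * x = 2 * y → x = y := by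
    intro x _ y _ h; omega
  have hmem : ∀ a ∈ ({5, 7, 9, 45, 78, 91} : Finset ℕ), a ∉ X.image (fun x => 2 * x) := by
    intro a ha hb
    simp only [Finset.mem_image] at hb
    obtain ⟨x, hx, hxa⟩ := hb
    simp only [Finset.mem_insert, Finset.mem_singleton] at ha
    rcases ha with h | h | h | h | h | h <;> subst h
    · omega
    · omega
    · omega
    · omega
    · have : x = 39 := by omega
      subst this; exact h39 hx
    · omega
  have hdisj : Disjoint ({5, 7, 9, 45, 78, 91} : Finset ℕ) (X.image (fun x => 2 * x)) :=
    Finset.disjoint_left.mpr hmem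
  refine ⟨⟨?_, ?_, ?_⟩, ?_, ?_⟩
  · intro x hx
    simp only [Finset.mem_union, Finset.mem_image, Finset.mem_insert,
      Finset.mem_singleton] at hx
    rcases hx with (h | h | h | h | h | h) | ⟨y, hy, hyx⟩
    all_goals first | omega | (have := hpos y hy; omega)
  · rw [Finset.sum_union hdisj, Finset.sum_image hinj]
    have h1 : ∑ x ∈ ({5, 7, 9, 45, 78, 91} : Finset ℕ), (1 : ℚ) / x = 1 / 2 := by
      norm_num
    have h2 : ∑ x ∈ X, (1 : ℚ) / (2 * x : ℕ) = 1 / 2 := by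
      have : ∀ x ∈ X, (1 : ℚ) / (2 * x : ℕ) = 1 / 2 * ((1 : ℚ) / x) := by
        intro x _
        push_cast
        rw [one_div, one_div, one_div, mul_inv]
      rw [Finset.sum_congr rfl this, ← Finset.mul_sum, hsum, mul_one]
    rw [h1, h2]; norm_num
  · rw [Finset.sum_union hdisj, Finset.sum_image hinj]
    have h2 : ∑ x ∈ X, (2 * x) ^ 2 = 4 * m := by
      rw [← hsq, Finset.mul_sum]
      exact Finset.sum_congr rfl fun x _ => by ring
    simp only [h2]
    norm_num [Finset.sum_insert, Finset.mem_insert]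
    ring
  · simp only [Finset.mem_union, Finset.mem_image, Finset.mem_insert, Finset.mem_singleton]
    push_neg
    exact ⟨by omega, fun x _ h => by omega⟩
  · simp only [Finset.mem_union, Finset.mem_image, Finset.mem_insert, Finset.mem_singleton]
    push_neg
    exact ⟨by omega, fun x _ h => by omega⟩
end

section
/- If X is a representation of an integer m with 21 ∉ X and 39 ∉ X, then Y = {3, 7, 42} ∪ 2X is a representation of 4m + 1822 with 21 ∉ Y and 39 ∉ Y. -/
theorem f2_representation (X : Finset ℕ) (m : ℕ)
    (hX : IsRepresentation X m) (h21 : 21 ∉ X) (h39 : 39 ∉ X) :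
    IsRepresentation (({3, 7, 42} : Finset ℕ) ∪ X.image (fun x => 2 * x))
      (4 * m + 1822) ∧
    21 ∉ ({3, 7, 42} : Finset ℕ) ∪ X.image (fun x => 2 * x) ∧
    39 ∉ ({3, 7, 42} : Finset ℕ) ∪ X.image (fun x => 2 * x) := by
  obtain ⟨hpos, hsum1, hsum2⟩ := hX
  have hinj : Set.InjOn (fun x => 2 * x) X := fun a _ b _ h => by simp only [] at h; omega
  have hdisj : Disjoint ({3, 7, 42} : Finset ℕ) (X.image (fun x => 2 * x)) := by
    simp only [Finset.disjoint_left, Finset.mem_insert, Finset.mem_singleton,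
      Finset.mem_image]
    rintro a (rfl | rfl | rfl) ⟨x, hx, hxe⟩
    · omega
    · omega
    · have : x = 21 := by omega
      exact h21 (this ▸ hx)
  have h2X21 : 21 ∉ X.image (fun x => 2 * x) := by
    simp only [Finset.mem_image]; rintro ⟨x, hx, hxe⟩; omega
  have h2X39 : 39 ∉ X.image (fun x => 2 * x) := by
    simp only [Finset.mem_image]; rintro ⟨x, hx, hxe⟩; omega
  refine ⟨⟨?_, ?_, ?_⟩, ?_, ?_⟩
  · intro x hx
    simp only [Finset.mem_union, Finset.mem_insert, Finset.mem_singleton,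
      Finset.mem_image] at hx
    rcases hx with (rfl | rfl | rfl) | ⟨y, hy, rfl⟩
    · norm_num
    · norm_num
    · norm_num
    · have := hpos y hy; omega
  · rw [Finset.sum_union hdisj, Finset.sum_image hinj]
    have : (∑ x ∈ X, (1 : ℚ) / (2 * x)) = 1 / 2 := by
      have : (∑ x ∈ X, (1 : ℚ) / (2 * x)) = (1/2) * ∑ x ∈ X, (1 : ℚ) / x := by
        rw [Finset.mul_sum]
        refine Finset.sum_congr rfl fun x hx => ?_
        push_cast
        ring
      rw [this, hsum1, mul_one]
    push_cast
    rw [this]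
    norm_num
  · rw [Finset.sum_union hdisj, Finset.sum_image hinj]
    have : (∑ x ∈ X, (2 * x) ^ 2) = 4 * ∑ x ∈ X, x ^ 2 := by
      rw [Finset.mul_sum]; exact Finset.sum_congr rfl fun x _ => by ring
    rw [this, hsum2]
    norm_num; ring
  · simp only [Finset.mem_union, Finset.mem_insert, Finset.mem_singleton]
    push_neg
    exact ⟨by norm_num, h2X21⟩
  · simp only [Finset.mem_union, Finset.mem_insert, Finset.mem_singleton]
    push_neg
    exact ⟨by norm_num, h2X39⟩
end

section
/- Let t be a positive integer, m a t-representable integer, and r = (k; y₁, …, y_l) a t-translation. Then the integer k²·m + (y₁² + ⋯ + y_l²) is t-representable. -/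
/-- `m` is `t`-representable. -/
def TRepresentable (t m : ℕ) : Prop :=
  ∃ X : Finset ℕ, (∀ x ∈ X, 0 < x) ∧ (∀ x ∈ X, t ≤ x) ∧
    (∑ x ∈ X, (1 : ℚ) / x) = 1 ∧ (∑ x ∈ X, x ^ 2) = m

/-- `(k; Y)` is a `t`-translation. -/
def IsTTranslation (t k : ℕ) (Y : Finset ℕ) : Prop :=
  0 < k ∧ (∀ y ∈ Y, 0 < y) ∧ (∀ y ∈ Y, t ≤ y) ∧
    (∑ y ∈ Y, (1 : ℚ) / y) = 1 - 1 / k ∧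
    (∀ y ∈ Y, y < t * k ∨ ¬ k ∣ y)

theorem translation_of_representable (t m k : ℕ) (Y : Finset ℕ)
    (ht : 0 < t) (hm : TRepresentable t m) (hr : IsTTranslation t k Y) :
    TRepresentable t (k ^ 2 * m + ∑ y ∈ Y, y ^ 2) := by
  obtain ⟨X, hX0, hXt, hX1, hX2⟩ := hm
  obtain ⟨hk, hY0, hYt, hY1, hYc⟩ := hr
  have hinj : Set.InjOn (fun x => k * x) X := fun a _ b _ h =>
    Nat.eq_of_mul_eq_mul_left hk h
  have hdisj : Disjoint Y (X.image (fun x => k * x)) := by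
    rw [Finset.disjoint_left]
    intro a haY haI
    obtain ⟨x, hxX, rfl⟩ := Finset.mem_image.mp haI
    rcases hYc _ haY with h | h
    · have : t * k ≤ k * x := by
        rw [mul_comm t k]; exact Nat.mul_le_mul_left k (hXt x hxX)
      omega
    · exact h ⟨x, rfl⟩
  refine ⟨Y ∪ X.image (fun x => k * x), ?_, ?_, ?_, ?_⟩
  · intro x hx
    rcases Finset.mem_union.mp hx with h | h
    · exact hY0 x h
    · obtain ⟨a, haX, rfl⟩ := Finset.mem_image.mp h
      exact Nat.mul_pos hk (hX0 a haX)
  · intro x hx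
    rcases Finset.mem_union.mp hx with h | h
    · exact hYt x h
    · obtain ⟨a, haX, rfl⟩ := Finset.mem_image.mp h
      calc t ≤ a := hXt a haX
        _ ≤ k * a := Nat.le_mul_of_pos_left a hk
  · rw [Finset.sum_union hdisj, Finset.sum_image hinj, hY1]
    have hkq : (k : ℚ) ≠ 0 := Nat.cast_ne_zero.mpr hk.ne'
    have : ∑ x ∈ X, (1 : ℚ) / (k * x) = 1 / k := by
      have h1 : ∑ x ∈ X, (1 : ℚ) / (k * x) = ∑ x ∈ X, (1 / (k:ℚ)) * (1 / (x:ℚ)) := by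
        apply Finset.sum_congr rfl
        intro x hx
        rw [div_mul_div_comm, one_mul]
      rw [h1, ← Finset.mul_sum, hX1, mul_one]
    push_cast at this ⊢
    rw [this]
    ring
  · rw [Finset.sum_union hdisj, Finset.sum_image hinj]
    have : ∑ x ∈ X, (k * x) ^ 2 = k ^ 2 * m := by
      rw [← hX2, Finset.mul_sum]
      apply Finset.sum_congr rfl
      intro x _; ring
    rw [this]; ring
end
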